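/- For a skew-symmetric matrix A of even order 2N and any fixed index i, the Pfaffian admits the Laplace-type expansion Pf(A) = Σ_{j ≠ i} (-1)^{i+j-1+[j<i]} a_{i,j} Pf(A_{î,ĵ}), where A_{î,ĵ} denotes A with rows and columns i and j removed; in particular Pf(A) = Σ_{j=2}^{2N} (-1)^j a_{1,j} Pf(A_{1̂,ĵ}). -/

import Mathlib

open Matrix Equiv

/-- Pfaffian of an `n × n` matrix, defined recursively by Laplace-type expansion
along the first row (it agrees with the signed sum over perfect matchings;
it is `0` for odd `n` and `1` for `n = 0`). -/
def pf {R : Type*} [CommRing R] : (n : ℕ) → Matrix (Fin n) (Fin n) R → R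
  | 0, _ => 1
  | 1, _ => 0
  | n + 2, M => ∑ j : Fin (n + 1), (-1 : R) ^ (j : ℕ) * M 0 j.succ *
      pf n ((M.submatrix Fin.succ Fin.succ).submatrix j.succAbove j.succAbove)



namespace PfAux
variable {R : Type*} [CommRing R]

lemma val_succAbove {n:ℕ} (p : Fin (n+1)) (i : Fin n) :
    ((p.succAbove i : Fin (n+1)) : ℕ) = (if (i:ℕ) < (p:ℕ) then (i:ℕ) else (i:ℕ)+1 : ℕ) := by
  split_ifs with h
  · rw [Fin.succAbove_of_castSucc_lt _ _ (by simpa [Fin.lt_def] using h)]; simp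
  · rw [Fin.succAbove_of_le_castSucc _ _ (by simp [Fin.le_def]; omega)]; simp

lemma pf_expand {n : ℕ} (M : Matrix (Fin (n+2)) (Fin (n+2)) R) :
    pf (n+2) M = ∑ j : Fin (n+1), (-1 : R) ^ (j : ℕ) * M 0 j.succ *
      pf n (M.submatrix (fun k => (j.succAbove k).succ) (fun k => (j.succAbove k).succ)) := by
  rw [pf]
  simp [Matrix.submatrix_submatrix, Function.comp_def]

lemma skew_sub {n m : ℕ} {A : Matrix (Fin n) (Fin n) R} (hA : Aᵀ = -A)
    (f : Fin m → Fin n) : (A.submatrix f f)ᵀ = -(A.submatrix f f) := by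
  ext i j
  have := congrFun (congrFun hA (f i)) (f j)
  simpa using this

lemma skew_entry {n : ℕ} {A : Matrix (Fin n) (Fin n) R} (hA : Aᵀ = -A) (i j : Fin n) :
    A j i = - A i j := by
  have := congrFun (congrFun hA i) j
  simpa using this

lemma npow_congr {a b : ℕ} (h : a % 2 = b % 2) : (-1:R)^a = (-1:R)^b := by
  conv_lhs => rw [← Nat.div_add_mod a 2]
  conv_rhs => rw [← Nat.div_add_mod b 2]
  simp [pow_add, pow_mul, h]

lemma npow_add_eq_zero {a b : ℕ} (h : (a + b) % 2 = 1) : (-1:R)^a + (-1:R)^b = 0 := by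
  have : (-1:R)^a = (-1:R)^(b+1) := npow_congr (by omega)
  rw [this, pow_succ]
  ring

lemma swap_succAbove_self {n : ℕ} (a b : Fin (n+1)) (hab : (a:ℕ)+1 = b) (k : Fin n) :
    swap a b (a.succAbove k) = b.succAbove k := by
  rw [Fin.ext_iff, swap_apply_def]
  simp only [apply_ite (Fin.val : Fin (n+1) → ℕ), val_succAbove, Fin.ext_iff]
  split_ifs <;> omega

lemma swap_succAbove_self' {n : ℕ} (a b : Fin (n+1)) (hab : (a:ℕ)+1 = b) (k : Fin n) :
    swap a b (b.succAbove k) = a.succAbove k := by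
  rw [Fin.ext_iff, swap_apply_def]
  simp only [apply_ite (Fin.val : Fin (n+1) → ℕ), val_succAbove, Fin.ext_iff]
  split_ifs <;> omega

lemma swap_succAbove_other {n : ℕ} (a b : Fin (n+1)) (hab : (a:ℕ)+1 = b) (x : Fin (n+1))
    (hxa : x ≠ a) (hxb : x ≠ b) (c d : Fin n)
    (hc : (c:ℕ) = if (a:ℕ) < x then (a:ℕ) else (a:ℕ)-1) (hd : (d:ℕ) = (c:ℕ)+1) (k : Fin n) :
    swap a b (x.succAbove k) = x.succAbove (swap c d k) := by
  rw [Fin.ne_iff_vne] at hxa hxb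
  rw [Fin.ext_iff, swap_apply_def, swap_apply_def]
  simp only [apply_ite (Fin.val : Fin (n+1) → ℕ), apply_ite (Fin.val : Fin n → ℕ),
    val_succAbove, Fin.ext_iff]
  split_ifs at hc <;> split_ifs <;> omega

lemma pf_expand2 {m : ℕ} (B : Matrix (Fin (m+4)) (Fin (m+4)) R) :
    pf (m+4) B = ∑ p : Fin (m+3) × Fin (m+1),
      (-1:R)^((p.1:ℕ)+(p.2:ℕ)) *
        (B 0 p.1.succ * B ((p.1.succAbove 0).succ) ((p.1.succAbove p.2.succ).succ) *
          pf m (B.submatrix (fun k => (p.1.succAbove ((p.2.succAbove k).succ)).succ)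
            (fun k => (p.1.succAbove ((p.2.succAbove k).succ)).succ))) := by
  rw [pf_expand (n := m+2), Fintype.sum_prod_type]
  apply Finset.sum_congr rfl
  intro j _
  rw [pf_expand (n := m), Finset.mul_sum]
  apply Finset.sum_congr rfl
  intro x _
  simp only [Matrix.submatrix_apply, Matrix.submatrix_submatrix, Function.comp_def]
  rw [pow_add]
  ring

lemma pf_swap01 {m : ℕ} (A : Matrix (Fin (m+4)) (Fin (m+4)) R) (hA : Aᵀ = -A)
    (a b : Fin (m+4)) (ha : (a:ℕ) = 0) (hb : (b:ℕ) = 1) :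
    pf (m+4) (A.submatrix (swap a b) (swap a b)) = - pf (m+4) A := by
  have ha0 : a = 0 := by ext; simpa using ha
  have hb1 : b = 1 := by ext; simp [Fin.val_one]; omega
  subst ha0; subst hb1
  have hs0 : swap (0:Fin (m+4)) 1 0 = 1 := swap_apply_left _ _
  have hs1 : swap (0:Fin (m+4)) 1 1 = 0 := swap_apply_right _ _
  have hsv : ∀ v : Fin (m+4), 2 ≤ (v:ℕ) → swap (0:Fin (m+4)) 1 v = v := by
    intro v hv
    apply swap_apply_of_ne_of_ne <;> (rw [Fin.ne_iff_vne]; simp [Fin.val_one]; omega)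
  have key3 : ∀ (j : Fin (m+3)) (x : Fin (m+1)),
      swap (0:Fin (m+4)) 1 ((j.succAbove x.succ).succ) = (j.succAbove x.succ).succ := by
    intro j x
    apply hsv
    simp [Fin.val_succ, val_succAbove]
    split_ifs <;> omega
  have key4 : ∀ (j : Fin (m+3)) (x : Fin (m+1)) (k : Fin m),
      swap (0:Fin (m+4)) 1 ((j.succAbove ((x.succAbove k).succ)).succ)
        = (j.succAbove ((x.succAbove k).succ)).succ := by
    intro j x k
    apply hsv
    simp [Fin.val_succ, val_succAbove]
    split_ifs <;> omega
  have hjx1 : ∀ (j : Fin (m+3)), 1 ≤ (j:ℕ) → swap (0:Fin (m+4)) 1 j.succ = j.succ := by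
    intro j hj
    apply hsv
    simp [Fin.val_succ]
    omega
  have hjx2 : ∀ (j : Fin (m+3)), 1 ≤ (j:ℕ) →
      swap (0:Fin (m+4)) 1 ((j.succAbove (0 : Fin (m+2))).succ) = 0 := by
    intro j hj
    have h0 : (j.succAbove (0 : Fin (m+2))) = 0 := by
      ext; simp [val_succAbove]; intro h; simp [h] at hj
    rw [h0, Fin.succ_zero_eq_one, hs1]
  have hjx3 : ∀ (j : Fin (m+3)), 1 ≤ (j:ℕ) →
      ((j.succAbove (0 : Fin (m+2))).succ : Fin (m+4)) = 1 := by
    intro j hj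
    have h0 : (j.succAbove (0 : Fin (m+2))) = 0 := by
      ext; simp [val_succAbove]; intro h; simp [h] at hj
    rw [h0, Fin.succ_zero_eq_one]
  rw [eq_neg_iff_add_eq_zero, pf_expand2, pf_expand2, ← Finset.sum_add_distrib]
  simp only [Matrix.submatrix_apply, Matrix.submatrix_submatrix, Function.comp_def, key3, key4,
    hs0]
  refine Finset.sum_involution
    (fun p _ => if (p.1:ℕ) = 0 then p else
      (⟨if (p.2:ℕ)+1 < (p.1:ℕ) then (p.2:ℕ)+1 else (p.2:ℕ)+2,
          by have := p.2.isLt; split_ifs <;> omega⟩,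
       ⟨if (p.1:ℕ) < (if (p.2:ℕ)+1 < (p.1:ℕ) then (p.2:ℕ)+1 else (p.2:ℕ)+2)
            then (p.1:ℕ)-1 else (p.1:ℕ)-2,
          by have := p.1.isLt; have := p.2.isLt; split_ifs <;> omega⟩))
    ?_ ?_ (fun p hp => Finset.mem_univ _) ?_
  · -- h : f p + f (g p) = 0
    rintro ⟨j, x⟩ -
    by_cases hj : (j:ℕ) = 0
    · simp only [if_pos hj]
      have hj' : j = 0 := by ext; exact hj
      subst hj'
      have h20 : swap (0:Fin (m+4)) 1 (((0:Fin (m+3)).succAbove (0:Fin (m+2))).succ)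
          = (((0:Fin (m+3)).succAbove (0:Fin (m+2))).succ) := by
        apply hsv; simp [val_succAbove]; rw [Nat.mod_eq_of_lt (by omega)]
      simp only [Fin.succ_zero_eq_one, hs1, h20]
      rw [skew_entry hA 0 1]
      ring
    · simp only [if_neg hj]
      have hbv := x.isLt; have hjv := j.isLt
      set bv : ℕ := if (x:ℕ)+1 < (j:ℕ) then (x:ℕ)+1 else (x:ℕ)+2 with hbvd
      have hbv1 : 1 ≤ bv := by rw [hbvd]; split_ifs <;> omega
      have hbv2 : bv ≤ m+2 := by rw [hbvd]; split_ifs <;> omega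
      have hbvne : bv ≠ (j:ℕ) := by rw [hbvd]; split_ifs <;> omega
      simp only [hjx1 j (by omega), hjx2 j (by omega), hjx3 j (by omega), hs1]
      set gj : Fin (m+3) := ⟨bv, by omega⟩ with hgjd
      set gx : Fin (m+1) := ⟨if (j:ℕ) < bv then (j:ℕ)-1 else (j:ℕ)-2,
        by split_ifs <;> omega⟩ with hgxd
      have hgjv : ((gj : Fin (m+3)) : ℕ) = bv := rfl
      have hgxv : ((gx : Fin (m+1)) : ℕ) = (if (j:ℕ) < bv then (j:ℕ)-1 else (j:ℕ)-2) := rfl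
      simp only [hjx1 gj (by rw [hgjv]; omega), hjx2 gj (by rw [hgjv]; omega),
        hjx3 gj (by rw [hgjv]; omega), hs1]
      have hE1 : gj.succ = (j.succAbove x.succ).succ := by
        ext
        simp only [Fin.val_succ, val_succAbove, hgjv, hbvd]
      have hE2 : (gj.succAbove gx.succ).succ = j.succ := by
        ext
        simp only [Fin.val_succ, val_succAbove, hgjv, hgxv, hbvd]
        split_ifs <;> omega
      have hP : (fun k : Fin m => (gj.succAbove ((gx.succAbove k).succ)).succ)
          = (fun k => (j.succAbove ((x.succAbove k).succ)).succ) := by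
        funext k
        ext
        simp only [Fin.val_succ, val_succAbove, hgjv, hgxv, hbvd]
        split_ifs <;> omega
      rw [hE1, hE2, hP]
      have hsg : (-1:R)^((j:ℕ)+(x:ℕ)) + (-1:R)^((if (x:ℕ)+1 < (j:ℕ) then (x:ℕ)+1 else (x:ℕ)+2)
          + (if (j:ℕ) < (if (x:ℕ)+1 < (j:ℕ) then (x:ℕ)+1 else (x:ℕ)+2) then (j:ℕ)-1 else (j:ℕ)-2)) = 0 := by
        apply npow_add_eq_zero
        split_ifs <;> omega
      linear_combination (A 0 j.succ * A 1 ((j.succAbove x.succ).succ)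
          + A 1 j.succ * A 0 ((j.succAbove x.succ).succ)) *
          pf m (A.submatrix (fun k => (j.succAbove ((x.succAbove k).succ)).succ)
            (fun k => (j.succAbove ((x.succAbove k).succ)).succ)) * hsg
  · -- g_ne
    rintro ⟨j, x⟩ - hfp
    by_cases hj : (j:ℕ) = 0
    · exfalso
      apply hfp
      have hj' : j = 0 := by ext; exact hj
      subst hj'
      have h20 : swap (0:Fin (m+4)) 1 (((0:Fin (m+3)).succAbove (0:Fin (m+2))).succ)
          = (((0:Fin (m+3)).succAbove (0:Fin (m+2))).succ) := by
        apply hsv; simp [val_succAbove]; rw [Nat.mod_eq_of_lt (by omega)]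
      simp only [Fin.succ_zero_eq_one, hs1, h20]
      rw [skew_entry hA 0 1]
      ring
    · simp only [if_neg hj]
      intro hEq
      have := congrArg (fun q : Fin (m+3) × Fin (m+1) => ((q.1 : Fin (m+3)) : ℕ)) hEq
      simp only at this
      have hx := x.isLt
      split_ifs at this <;> omega
  · -- g_inv
    rintro ⟨j, x⟩ -
    by_cases hj : (j:ℕ) = 0
    · simp only [if_pos hj]
    · simp only [if_neg hj]
      have hx := x.isLt; have hjv := j.isLt
      have hcond : ((if (x:ℕ)+1 < (j:ℕ) then (x:ℕ)+1 else (x:ℕ)+2) ≠ 0) := by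
        split_ifs <;> omega
      rw [if_neg hcond]
      rw [Prod.mk.injEq]
      constructor <;> (ext; simp only [Fin.val_mk]; split_ifs <;> omega)

lemma pf_swap_adj : ∀ (n : ℕ) (A : Matrix (Fin n) (Fin n) R), Aᵀ = -A →
    ∀ a b : Fin n, (a:ℕ) + 1 = (b:ℕ) →
    pf n (A.submatrix (swap a b) (swap a b)) = - pf n A := by
  intro n
  induction n using Nat.strong_induction_on with
  | _ n IH =>
  rcases n with _ | n
  · intro A hA a b hab; exact absurd a.isLt (by omega)
  rcases n with _ | n
  · intro A hA a b hab; have := a.isLt; have := b.isLt; omega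
  intro A hA a b hab
  rcases Nat.eq_zero_or_pos (a:ℕ) with ha0 | hapos
  · -- a = 0, b = 1
    rcases n with _ | n
    · -- size 2
      have hb1 : (b:ℕ) = 1 := by omega
      have ha' : a = 0 := by ext; simpa using ha0
      have hb' : b = 1 := by ext; simpa using hb1
      subst ha'; subst hb'
      rw [pf_expand, pf_expand, Fin.sum_univ_one, Fin.sum_univ_one]
      have h1 : ((0 : Fin 1).succ : Fin 2) = 1 := rfl
      rw [h1]
      simp only [Matrix.submatrix_apply]
      have hs0 : swap (0:Fin 2) 1 0 = 1 := swap_apply_left 0 1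
      have hs1 : swap (0:Fin 2) 1 1 = 0 := swap_apply_right 0 1
      rw [hs0, hs1, skew_entry hA 0 1]
      simp [pf]
    rcases n with _ | n
    · -- size 3
      rw [pf_expand, pf_expand]
      simp [pf]
    · -- size m+4
      exact pf_swap01 A hA a b ha0 (by omega)
  · -- recursion case: a = t+1
    obtain ⟨t, ht⟩ : ∃ t, (a:ℕ) = t + 1 := ⟨(a:ℕ)-1, by omega⟩
    have hbn := b.isLt
    set a' : Fin (n+1) := ⟨t, by omega⟩ with ha'd
    set b' : Fin (n+1) := ⟨t+1, by omega⟩ with hb'd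
    have hab' : (a':ℕ) + 1 = (b':ℕ) := rfl
    have htn : t + 1 ≤ n := by omega
    have hs0 : swap a b 0 = 0 := by
      apply swap_apply_of_ne_of_ne <;> (rw [Fin.ne_iff_vne]; simp [Fin.val_zero]; omega)
    have hss : ∀ x : Fin (n+1), swap a b x.succ = (swap a' b' x).succ := by
      intro x
      rw [Fin.ext_iff, swap_apply_def, swap_apply_def]
      simp only [apply_ite (Fin.val : Fin (n+2) → ℕ), apply_ite (Fin.val : Fin (n+1) → ℕ),
        Fin.val_succ, Fin.ext_iff]
      have h1 : (a':ℕ) = t := rfl; have h2 : (b':ℕ) = t + 1 := rfl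
      split_ifs <;> omega
    rw [pf_expand, pf_expand, ← Finset.sum_neg_distrib]
    apply Fintype.sum_equiv (swap a' b')
    intro x
    simp only [Matrix.submatrix_apply, Matrix.submatrix_submatrix, Function.comp_def, hs0, hss]
    rcases eq_or_ne x a' with hx | hxa
    · rw [hx]
      simp only [swap_succAbove_self a' b' hab', swap_apply_left]
      ring
    rcases eq_or_ne x b' with hx | hxb
    · rw [hx]
      simp only [swap_succAbove_self' a' b' hab', swap_apply_right]
      ring
    · have hne : swap a' b' x = x := swap_apply_of_ne_of_ne hxa hxb
      rw [hne]
      have hxa' : (x:ℕ) ≠ t := by rw [Fin.ne_iff_vne] at hxa; simpa using hxa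
      have hxb' : (x:ℕ) ≠ t+1 := by rw [Fin.ne_iff_vne] at hxb; simpa using hxb
      have hxn := x.isLt
      have hcn : (if t < (x:ℕ) then t else t-1) < n := by split_ifs <;> omega
      have hdn : (if t < (x:ℕ) then t+1 else t) < n := by split_ifs <;> omega
      set c : Fin n := ⟨if t < (x:ℕ) then t else t-1, hcn⟩ with hcd
      set d : Fin n := ⟨if t < (x:ℕ) then t+1 else t, hdn⟩ with hdd
      have hc : (c:ℕ) = if (a':ℕ) < (x:ℕ) then (a':ℕ) else (a':ℕ)-1 := rfl
      have hd : (d:ℕ) = (c:ℕ)+1 := by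
        show (if t < (x:ℕ) then t+1 else t) = (if t < (x:ℕ) then t else t-1)+1
        split_ifs <;> omega
      have hfun : (fun k => ((swap a' b') (x.succAbove k)).succ)
          = (fun k => (x.succAbove ((swap c d) k)).succ) := by
        funext k; rw [swap_succAbove_other a' b' hab' x hxa hxb c d hc hd]
      rw [hfun]
      have hsub : A.submatrix (fun k => (x.succAbove ((swap c d) k)).succ)
            (fun k => (x.succAbove ((swap c d) k)).succ)
          = (A.submatrix (fun k => (x.succAbove k).succ)
              (fun k => (x.succAbove k).succ)).submatrix (swap c d) (swap c d) := by
        simp [Matrix.submatrix_submatrix, Function.comp_def]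
      rw [hsub, IH n (by omega) _ (skew_sub hA _) c d hd.symm]
      ring
lemma pf_swap_dist : ∀ (d n : ℕ) (A : Matrix (Fin n) (Fin n) R), Aᵀ = -A →
    ∀ a b : Fin n, (a:ℕ) + 1 + d = (b:ℕ) →
    pf n (A.submatrix (swap a b) (swap a b)) = - pf n A := by
  intro d
  induction d with
  | zero =>
    intro n A hA a b hab
    exact pf_swap_adj n A hA a b (by omega)
  | succ d IH =>
    intro n A hA a b hab
    have hbn := b.isLt
    set b' : Fin n := ⟨(a:ℕ)+1+d, by omega⟩ with hb'd
    have hb'v : (b':ℕ) = (a:ℕ)+1+d := rfl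
    have hfun : ∀ v : Fin n, swap a b v = swap b' b (swap a b' (swap b' b v)) := by
      intro v
      rw [Fin.ext_iff]
      simp only [swap_apply_def, apply_ite (Fin.val : Fin n → ℕ), Fin.ext_iff, hb'v]
      split_ifs <;> omega
    have hfun' : ⇑(swap a b) = (⇑(swap b' b) ∘ ⇑(swap a b')) ∘ ⇑(swap b' b) :=
      funext fun v => hfun v
    have hM : A.submatrix (swap a b) (swap a b)
        = ((A.submatrix (swap b' b) (swap b' b)).submatrix (swap a b') (swap a b')).submatrix
            (swap b' b) (swap b' b) := by
      simp only [Matrix.submatrix_submatrix]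
      rw [← hfun']
    rw [hM]
    rw [pf_swap_adj _ _ (skew_sub (skew_sub hA _) _) b' b (by omega)]
    rw [IH _ _ (skew_sub hA _) a b' (by omega)]
    rw [pf_swap_adj _ _ hA b' b (by omega)]
    ring

lemma pf_swap {n : ℕ} (A : Matrix (Fin n) (Fin n) R) (hA : Aᵀ = -A)
    (a b : Fin n) (hab : a ≠ b) :
    pf n (A.submatrix (swap a b) (swap a b)) = - pf n A := by
  rcases Nat.lt_or_ge (a:ℕ) (b:ℕ) with h | h
  · exact pf_swap_dist ((b:ℕ) - (a:ℕ) - 1) n A hA a b (by omega)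
  · have hlt : (b:ℕ) < (a:ℕ) := by
      rcases Nat.lt_or_ge (b:ℕ) (a:ℕ) with h' | h'
      · exact h'
      · exact absurd (Fin.ext (by omega)) hab
    rw [Equiv.swap_comm]
    exact pf_swap_dist ((a:ℕ) - (b:ℕ) - 1) n A hA b a (by omega)

lemma pf_perm {n : ℕ} (σ : Equiv.Perm (Fin n)) :
    ∀ (A : Matrix (Fin n) (Fin n) R), Aᵀ = -A →
    pf n (A.submatrix σ σ) = ((Equiv.Perm.sign σ : ℤ) : R) * pf n A := by
  refine Equiv.Perm.swap_induction_on σ ?_ ?_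
  · intro A hA
    simp
  · intro x y z hyz IH A hA
    have hM : A.submatrix ⇑(swap y z * x) ⇑(swap y z * x)
        = (A.submatrix (swap y z) (swap y z)).submatrix x x := by
      simp only [Matrix.submatrix_submatrix]
      rfl
    rw [hM, IH _ (skew_sub hA _), pf_swap A hA y z hyz]
    rw [Equiv.Perm.sign_mul, Equiv.Perm.sign_swap hyz]
    push_cast
    ring

end PfAux


open PfAux in
/-- the Laplace-type expansion of the Pfaffian along a fixed
row/column index `i`; in particular, the expansion along the first index.
For `j ≠ i`, the index `j` is parametrized as `j = i.succAbove j'`, and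
`A_{î,ĵ}` is the submatrix obtained by deleting rows and columns `i` and `j`
(realized by the order embedding `k ↦ i.succAbove (j'.succAbove k)`).
Signs are written for the 1-based indices `i+1`, `j+1` of the paper. -/
theorem pf_laplace_expansion {R : Type*} [CommRing R] (N : ℕ)
    (A : Matrix (Fin (2 * N + 2)) (Fin (2 * N + 2)) R)
    (hA : Aᵀ = -A) (hdiag : ∀ i, A i i = 0) (i : Fin (2 * N + 2)) :
    (pf (2 * N + 2) A = ∑ j' : Fin (2 * N + 1),
        (-1 : R) ^ ((i : ℕ) + ((i.succAbove j' : Fin (2 * N + 2)) : ℕ) + 1 +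
            (if i.succAbove j' < i then 1 else 0)) *
          A i (i.succAbove j') *
          pf (2 * N) (A.submatrix (fun k => i.succAbove (j'.succAbove k))
            (fun k => i.succAbove (j'.succAbove k))))
    ∧ (pf (2 * N + 2) A = ∑ j' : Fin (2 * N + 1),
        (-1 : R) ^ (j' : ℕ) * A 0 j'.succ *
          pf (2 * N) (A.submatrix (fun k => Fin.succ (j'.succAbove k))
            (fun k => Fin.succ (j'.succAbove k)))) := by
  refine ⟨?_, pf_expand A⟩
  set e : Equiv.Perm (Fin (2*N+2)) := (i.cycleRange)⁻¹ with he
  have he0 : e 0 = i := by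
    rw [he]
    exact Fin.cycleRange_symm_zero i
  have hes : ∀ y : Fin (2*N+1), e y.succ = i.succAbove y := by
    intro y
    rw [he]
    exact Fin.cycleRange_symm_succ i y
  have hsign : ((Equiv.Perm.sign e : ℤ) : R) = (-1:R)^(i:ℕ) := by
    rw [he, Equiv.Perm.sign_inv, Fin.sign_cycleRange]
    push_cast
    ring
  have hE : pf (2*N+2) (A.submatrix e e) = ((Equiv.Perm.sign e : ℤ):R) * pf (2*N+2) A :=
    pf_perm e A hA
  have hx : pf (2*N+2) (A.submatrix e e) = ∑ j' : Fin (2*N+1),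
      (-1:R)^(j':ℕ) * A i (i.succAbove j') *
        pf (2*N) (A.submatrix (fun k => i.succAbove (j'.succAbove k))
          (fun k => i.succAbove (j'.succAbove k))) := by
    rw [pf_expand]
    apply Finset.sum_congr rfl
    intro j _
    simp only [Matrix.submatrix_apply, Matrix.submatrix_submatrix, Function.comp_def, he0, hes]
  have hfinal : pf (2*N+2) A = (-1:R)^(i:ℕ) * pf (2*N+2) (A.submatrix e e) := by
    rw [hE, hsign, ← mul_assoc, ← pow_add]
    rw [npow_congr (a := (i:ℕ)+(i:ℕ)) (b := 0) (by omega)]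
    simp
  rw [hfinal, hx, Finset.mul_sum]
  apply Finset.sum_congr rfl
  intro j _
  by_cases hj : (j:ℕ) < (i:ℕ)
  · have hlt : i.succAbove j < i := by
      rw [Fin.lt_def, val_succAbove]
      split_ifs <;> omega
    rw [if_pos hlt]
    have hv : ((i.succAbove j : Fin (2*N+2)):ℕ) = (j:ℕ) := by
      rw [val_succAbove]; simp [hj]
    rw [hv, npow_congr (a := (i:ℕ)+(j:ℕ)+1+1) (b := (i:ℕ)+(j:ℕ)) (by omega), pow_add]
    ring
  · have hlt : ¬ (i.succAbove j < i) := by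
      rw [Fin.lt_def, val_succAbove]
      split_ifs <;> omega
    rw [if_neg hlt]
    have hv : ((i.succAbove j : Fin (2*N+2)):ℕ) = (j:ℕ)+1 := by
      rw [val_succAbove]; simp; omega
    rw [hv, npow_congr (a := (i:ℕ)+((j:ℕ)+1)+1+0) (b := (i:ℕ)+(j:ℕ)) (by omega), pow_add]
    ring
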